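/- The function ξ : ℝ → ℝ defined by ξ(t) = 2 / ( cosh(t/2)·(π − 4·arctan(tanh(t/4))) ) satisfies, for all t ∈ ℝ, the differential equation 2·ξ'(t) = ξ(t)·( ξ(t) − tanh(t/2) ), together with the boundary conditions lim_{t→−∞} ξ(t) = 0 and lim_{t→+∞} ξ(t) = 1. (Note tanh(t/2) = sinh t/(cosh t + 1), so this is the κ = 0 scaling equation (2/ξ)·dξ/dt = ξ − sinh t/(cosh t + cosh κ).) -/

import Mathlib

noncomputable section

open Real Filter Topology

/-- The κ = 0 scaling profile `ξ(t)`. -/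
def ξfun (t : ℝ) : ℝ :=
  2 / (Real.cosh (t/2) * (Real.pi - 4 * Real.arctan (Real.tanh (t/4))))

private lemma hasDerivAt_tanh' (x : ℝ) : HasDerivAt Real.tanh (1 / Real.cosh x ^ 2) x := by
  have h := (Real.hasDerivAt_sinh x).div (Real.hasDerivAt_cosh x) (Real.cosh_pos x).ne'
  simp only [Pi.div_def, ← Real.tanh_eq_sinh_div_cosh] at h
  convert h using 1
  · rfl
  · rfl
  have := Real.cosh_sq_sub_sinh_sq x
  field_simp
  nlinarith [Real.cosh_pos x]

private lemma tanh_lt_one' (x : ℝ) : Real.tanh x < 1 := by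
  rw [Real.tanh_eq_sinh_div_cosh, div_lt_one (Real.cosh_pos x)]
  nlinarith [Real.cosh_sub_sinh x, Real.exp_pos (-x)]

private lemma neg_one_lt_tanh' (x : ℝ) : -1 < Real.tanh x := by
  rw [Real.tanh_eq_sinh_div_cosh, lt_div_iff₀ (Real.cosh_pos x)]
  nlinarith [Real.sinh_add_cosh x, Real.exp_pos x]

private lemma gpos (t : ℝ) : 0 < Real.pi - 4 * Real.arctan (Real.tanh (t/4)) := by
  have h : Real.arctan (Real.tanh (t/4)) < Real.arctan 1 :=
    Real.arctan_strictMono (tanh_lt_one' _)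
  rw [Real.arctan_one] at h
  linarith

private lemma tendsto_tanh_atTop' : Tendsto Real.tanh atTop (𝓝 1) := by
  have heq : ∀ x : ℝ, Real.tanh x = (1 - Real.exp (-(2*x))) / (1 + Real.exp (-(2*x))) := by
    intro x
    rw [Real.tanh_eq_sinh_div_cosh, Real.sinh_eq, Real.cosh_eq]
    have h1 : Real.exp (-x) = (Real.exp x)⁻¹ := by rw [Real.exp_neg]
    have h2 : Real.exp (-(2*x)) = (Real.exp x)⁻¹ * (Real.exp x)⁻¹ := by
      rw [show -(2*x) = -x + -x by ring, Real.exp_add, Real.exp_neg]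
    have hx := Real.exp_pos x
    rw [h1, h2]
    have hden : (0:ℝ) < (Real.exp x + (Real.exp x)⁻¹) / 2 := by positivity
    field_simp
  have hexp : Tendsto (fun x : ℝ => Real.exp (-(2*x))) atTop (𝓝 0) := by
    have h2x : Tendsto (fun x : ℝ => 2*x) atTop atTop :=
      Tendsto.const_mul_atTop two_pos tendsto_id
    exact Real.tendsto_exp_neg_atTop_nhds_zero.comp h2x
  have h1 : Tendsto (fun x : ℝ => 1 - Real.exp (-(2*x))) atTop (𝓝 (1 - 0)) :=
    tendsto_const_nhds.sub hexp
  have h2 : Tendsto (fun x : ℝ => 1 + Real.exp (-(2*x))) atTop (𝓝 (1 + 0)) :=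
    tendsto_const_nhds.add hexp
  have h3 := h1.div h2 (by norm_num)
  norm_num at h3
  exact Tendsto.congr (fun x => (heq x).symm) h3

private lemma tendsto_tanh_atBot' : Tendsto Real.tanh atBot (𝓝 (-1)) := by
  have := (tendsto_tanh_atTop'.comp tendsto_neg_atBot_atTop).neg
  simp only [Function.comp_def] at this
  refine Tendsto.congr (fun x => ?_) this
  rw [← Real.tanh_neg, neg_neg]

private lemma tendsto_cosh_atTop' : Tendsto Real.cosh atTop atTop := by
  apply tendsto_atTop_mono (fun x => ?_) (Real.tendsto_exp_atTop.atTop_div_const two_pos)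
  rw [Real.cosh_eq]
  linarith [Real.exp_pos (-x)]

private lemma cosh_key (t : ℝ) :
    Real.cosh (t/2) = Real.cosh (t/4) ^ 2 + Real.sinh (t/4) ^ 2 := by
  rw [show t/2 = 2 * (t/4) by ring, Real.cosh_two_mul]

/-- derivative of `g t = π - 4 arctan (tanh (t/4))` is `-1/cosh(t/2)` -/
private lemma hasDerivAt_g (t : ℝ) :
    HasDerivAt (fun t : ℝ => Real.pi - 4 * Real.arctan (Real.tanh (t/4)))
      (-(1 / Real.cosh (t/2))) t := by
  have h4 : HasDerivAt (fun t : ℝ => t/4) (1/4) t := by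
    simpa using (hasDerivAt_id t).div_const 4
  have htanh : HasDerivAt (fun t : ℝ => Real.tanh (t/4))
      (1 / Real.cosh (t/4) ^ 2 * (1/4)) t := by have := (hasDerivAt_tanh' (t/4)).comp t h4; exact this
  have harc : HasDerivAt (fun t : ℝ => Real.arctan (Real.tanh (t/4)))
      (1 / (1 + Real.tanh (t/4) ^ 2) * (1 / Real.cosh (t/4) ^ 2 * (1/4))) t :=
    by have := (Real.hasDerivAt_arctan (Real.tanh (t/4))).comp t htanh; exact this
  have h := (hasDerivAt_const t Real.pi).sub (harc.const_mul 4)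
  simp only [Pi.sub_def] at h
  convert h using 1
  · rfl
  · rfl
  have hc : (0:ℝ) < Real.cosh (t/4) := Real.cosh_pos _
  have hc2 : (0:ℝ) < Real.cosh (t/2) := Real.cosh_pos _
  rw [Real.tanh_eq_sinh_div_cosh, cosh_key]
  have hd : (0:ℝ) < 1 + (Real.sinh (t/4) / Real.cosh (t/4)) ^ 2 := by positivity
  rw [cosh_key] at hc2
  field_simp
  ring

private lemma hasDerivAt_D (t : ℝ) :
    HasDerivAt (fun t : ℝ => Real.cosh (t/2) * (Real.pi - 4 * Real.arctan (Real.tanh (t/4))))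
      (Real.sinh (t/2) * (1/2) * (Real.pi - 4 * Real.arctan (Real.tanh (t/4)))
        + Real.cosh (t/2) * (-(1 / Real.cosh (t/2)))) t := by
  have h2 : HasDerivAt (fun t : ℝ => t/2) (1/2) t := by
    simpa using (hasDerivAt_id t).div_const 2
  have hcosh : HasDerivAt (fun t : ℝ => Real.cosh (t/2)) (Real.sinh (t/2) * (1/2)) t :=
    by have := (Real.hasDerivAt_cosh (t/2)).comp t h2; exact this
  exact hcosh.mul (hasDerivAt_g t)

/-- `ξ` solves `2ξ' = ξ(ξ − tanh(t/2))` with the boundary conditions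
`ξ(−∞) = 0`, `ξ(+∞) = 1`. -/
theorem stmt14 :
    (∀ t : ℝ, HasDerivAt ξfun (ξfun t * (ξfun t - Real.tanh (t/2)) / 2) t)
    ∧ Filter.Tendsto ξfun Filter.atBot (nhds 0)
    ∧ Filter.Tendsto ξfun Filter.atTop (nhds 1) := by
  refine ⟨?_, ?_, ?_⟩
  · intro t
    set g : ℝ → ℝ := fun t => Real.pi - 4 * Real.arctan (Real.tanh (t/4)) with hgdef
    have hD0 : Real.cosh (t/2) * g t ≠ 0 :=
      (mul_pos (Real.cosh_pos _) (gpos t)).ne'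
    have h := (hasDerivAt_const t (2:ℝ)).div (hasDerivAt_D t) hD0
    simp only [Pi.div_def] at h
    have hxi : ξfun = fun t => 2 / (Real.cosh (t/2) * g t) := rfl
    rw [hxi]
    convert h using 1
    · rfl
    · rfl
    have hc : (0:ℝ) < Real.cosh (t/2) := Real.cosh_pos _
    have hg : (0:ℝ) < g t := gpos t
    rw [show Real.pi - 4 * Real.arctan (Real.tanh (t/4)) = g t from rfl]
    rw [Real.tanh_eq_sinh_div_cosh]
    field_simp
    ring
  · -- t → -∞
    have harc : Tendsto (fun t : ℝ => Real.arctan (Real.tanh (t/4))) atBot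
        (𝓝 (Real.arctan (-1))) := by
      refine (Real.continuous_arctan.tendsto _).comp ?_
      refine tendsto_tanh_atBot'.comp ?_
      exact tendsto_id.atBot_div_const (by norm_num)
    rw [Real.arctan_neg, Real.arctan_one] at harc
    have hg : Tendsto (fun t : ℝ => Real.pi - 4 * Real.arctan (Real.tanh (t/4))) atBot
        (𝓝 (2 * Real.pi)) := by
      have := (tendsto_const_nhds : Tendsto (fun _ : ℝ => Real.pi) _ (𝓝 Real.pi)).sub (harc.const_mul 4)
      convert this using 2
      ring
    have hcosh : Tendsto (fun t : ℝ => Real.cosh (t/2)) atBot atTop := by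
      have h1 : Tendsto (fun t : ℝ => -(t/2)) atBot atTop := by
        refine tendsto_neg_atBot_atTop.comp (tendsto_id.atBot_div_const (by norm_num))
      have := tendsto_cosh_atTop'.comp h1
      simp only [Function.comp_def, Real.cosh_neg] at this
      exact this
    have hD : Tendsto (fun t : ℝ => Real.cosh (t/2) *
        (Real.pi - 4 * Real.arctan (Real.tanh (t/4)))) atBot atTop :=
      hcosh.atTop_mul_pos (by positivity) hg
    exact tendsto_const_nhds.div_atTop hD
  · -- t → +∞
    set g : ℝ → ℝ := fun t => Real.pi - 4 * Real.arctan (Real.tanh (t/4)) with hgdef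
    -- key identity: sin (g t / 2) * cosh (t/2) = 1
    have key : ∀ t : ℝ, Real.sin (g t / 2) * Real.cosh (t/2) = 1 := by
      intro t
      have h1 : g t / 2 = Real.pi/2 - 2 * Real.arctan (Real.tanh (t/4)) := by
        simp only [hgdef]; ring
      rw [h1, Real.sin_pi_div_two_sub, Real.cos_two_mul]
      have hcos2 : Real.cos (Real.arctan (Real.tanh (t/4))) ^ 2
          = 1 / (1 + Real.tanh (t/4) ^ 2) := by
        rw [Real.cos_arctan]
        rw [div_pow, one_pow, Real.sq_sqrt (by positivity)]
      rw [hcos2, Real.tanh_eq_sinh_div_cosh, cosh_key]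
      have hc : (0:ℝ) < Real.cosh (t/4) := Real.cosh_pos _
      have h2 := Real.cosh_sq_sub_sinh_sq (t/4)
      have hd : (0:ℝ) < 1 + (Real.sinh (t/4) / Real.cosh (t/4)) ^ 2 := by positivity
      field_simp
      nlinarith [Real.cosh_pos (t/4), Real.sinh_sq (t/4)]
    have hxi : ∀ t : ℝ, ξfun t = Real.sin (g t / 2) / (g t / 2) := by
      intro t
      have hc : (0:ℝ) < Real.cosh (t/2) := Real.cosh_pos _
      have hg : (0:ℝ) < g t := gpos t
      have hk := key t
      rw [ξfun]
      rw [show Real.cosh (t/2) * (Real.pi - 4 * Real.arctan (Real.tanh (t/4)))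
          = Real.cosh (t/2) * g t from rfl]
      have hs : Real.sin (g t / 2) = 1 / Real.cosh (t/2) := (eq_div_iff hc.ne').mpr hk
      rw [hs]
      field_simp
    -- g t / 2 → 0 within {x ≠ 0}
    have harc : Tendsto (fun t : ℝ => Real.arctan (Real.tanh (t/4))) atTop
        (𝓝 (Real.arctan 1)) := by
      refine (Real.continuous_arctan.tendsto _).comp ?_
      exact tendsto_tanh_atTop'.comp (tendsto_id.atTop_div_const (by norm_num))
    rw [Real.arctan_one] at harc
    have hg0 : Tendsto (fun t : ℝ => g t / 2) atTop (𝓝 0) := by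
      have := ((tendsto_const_nhds : Tendsto (fun _ : ℝ => Real.pi) _ (𝓝 Real.pi)).sub (harc.const_mul 4)).div_const 2
      simp only [hgdef]
      convert this using 2
      ring
    have hgW : Tendsto (fun t : ℝ => g t / 2) atTop (𝓝[≠] (0:ℝ)) := by
      rw [tendsto_nhdsWithin_iff]
      refine ⟨hg0, Eventually.of_forall fun t => ?_⟩
      have := gpos t
      simp only [Set.mem_compl_iff, Set.mem_singleton_iff]
      positivity
    have hslope : Tendsto (fun y : ℝ => Real.sin y / y) (𝓝[≠] (0:ℝ)) (𝓝 1) := by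
      have h := (hasDerivAt_iff_tendsto_slope).mp (Real.hasDerivAt_sin 0)
      rw [Real.cos_zero] at h
      refine h.congr fun y => ?_
      simp [slope_def_field, Real.sin_zero]
    have := hslope.comp hgW
    simp only [Function.comp_def] at this
    exact Tendsto.congr (fun t => (hxi t).symm) this

end
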